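/- Fix x* > 0, t₁ > 0 and a sensor location x_m with 0 < x_m ≤ x*, and let u, v : [0,x*] → ℝ be continuous with t₁ ≤ min(τ*_u, τ*_v). Then the pressures at the respective filling times satisfy |p^u(x_m, τ*_u) − p^v(x_m, τ*_v)| ≤ 2·((x*)²/t₁)·M_{u,v}³·‖u − v‖, where M_{u,v} = exp(max(‖u‖,‖v‖)). (Note p^u(x_m, τ*_u) = 2 − F_u(x_m)/F_u(x*).) -/

import Mathlib

open Set intervalIntegral
noncomputable def Fu (xs : ℝ) (h : 0 ≤ xs) (u : C(Icc (0:ℝ) xs, ℝ)) (x : ℝ) : ℝ :=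
  ∫ z in (0:ℝ)..x, Real.exp (-(u (projIcc 0 xs h z)))

noncomputable def Wu (xs : ℝ) (h : 0 ≤ xs) (u : C(Icc (0:ℝ) xs, ℝ)) (x : ℝ) : ℝ :=
  ∫ ξ in (0:ℝ)..x, Fu xs h u ξ

noncomputable def tau (xs : ℝ) (h : 0 ≤ xs) (u : C(Icc (0:ℝ) xs, ℝ)) : ℝ :=
  Wu xs h u xs


/-- Dimensionless pressure, given the moving front `Υ`:
`p(x,t) = 2 - F_u(x)/F_u(Υ(t))` behind the front (`x ≤ Υ t`) and `1` ahead of it. -/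
noncomputable def press (xs : ℝ) (h : 0 ≤ xs) (u : C(Icc (0:ℝ) xs, ℝ)) (Υ : ℝ → ℝ)
    (x t : ℝ) : ℝ :=
  if x ≤ Υ t then 2 - Fu xs h u x / Fu xs h u (Υ t) else 1


lemma exp_abs_sub (a b : ℝ) : |Real.exp a - Real.exp b| ≤ Real.exp (max a b) * |a - b| := by
  wlog hab : b ≤ a generalizing a b
  · rw [abs_sub_comm, abs_sub_comm a b, max_comm]; exact this b a (le_of_not_ge hab)
  have h1 := Real.add_one_le_exp (b - a)
  have h2 : Real.exp a * Real.exp (b - a) = Real.exp b := by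
    rw [← Real.exp_add]; ring_nf
  have h3 := Real.exp_pos a
  have h5 : Real.exp b ≤ Real.exp a := Real.exp_le_exp.mpr hab
  rw [max_eq_left hab, abs_of_nonneg (by linarith), abs_of_nonneg (by linarith)]
  nlinarith

lemma abs_apply_le {xs : ℝ} (u : C(Icc (0:ℝ) xs, ℝ)) (p : Icc (0:ℝ) xs) : |u p| ≤ ‖u‖ := by
  simpa [Real.norm_eq_abs] using u.norm_coe_le_norm p

lemma contE (xs : ℝ) (h : 0 ≤ xs) (u : C(Icc (0:ℝ) xs, ℝ)) :
    Continuous fun z => Real.exp (-(u (projIcc 0 xs h z))) :=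
  Real.continuous_exp.comp ((u.continuous.comp continuous_projIcc).neg)

lemma intE (xs : ℝ) (h : 0 ≤ xs) (u : C(Icc (0:ℝ) xs, ℝ)) (a b : ℝ) :
    IntervalIntegrable (fun z => Real.exp (-(u (projIcc 0 xs h z)))) MeasureTheory.volume a b :=
  (contE xs h u).intervalIntegrable a b

lemma Fu_le (xs : ℝ) (h : 0 ≤ xs) (u : C(Icc (0:ℝ) xs, ℝ)) (x : ℝ) (hx : 0 ≤ x) :
    Fu xs h u x ≤ x * Real.exp ‖u‖ := by
  have := intervalIntegral.integral_mono_on hx (intE xs h u 0 x)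
    (_root_.intervalIntegrable_const (c := Real.exp ‖u‖))
    (fun z _ => Real.exp_le_exp.mpr
      (le_trans (neg_le_abs _) (abs_apply_le u _)))
  simpa [Fu, smul_eq_mul] using this

lemma Fu_ge (xs : ℝ) (h : 0 ≤ xs) (u : C(Icc (0:ℝ) xs, ℝ)) (x : ℝ) (hx : 0 ≤ x) :
    x * Real.exp (-‖u‖) ≤ Fu xs h u x := by
  have := intervalIntegral.integral_mono_on hx
    (_root_.intervalIntegrable_const (c := Real.exp (-‖u‖))) (intE xs h u 0 x)
    (fun z _ => Real.exp_le_exp.mpr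
      (neg_le_neg (le_trans (le_abs_self _) (abs_apply_le u _))))
  simpa [Fu, smul_eq_mul] using this

lemma Fu_mono (xs : ℝ) (h : 0 ≤ xs) (u : C(Icc (0:ℝ) xs, ℝ)) : Monotone (Fu xs h u) := by
  intro a b hab
  have hadd := intervalIntegral.integral_add_adjacent_intervals (intE xs h u 0 a) (intE xs h u a b)
  have hpos : 0 ≤ ∫ z in a..b, Real.exp (-(u (projIcc 0 xs h z))) :=
    intervalIntegral.integral_nonneg hab (fun z _ => (Real.exp_pos _).le)
  simp only [Fu]
  linarith

lemma intF (xs : ℝ) (h : 0 ≤ xs) (u : C(Icc (0:ℝ) xs, ℝ)) (a b : ℝ) :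
    IntervalIntegrable (Fu xs h u) MeasureTheory.volume a b :=
  (Fu_mono xs h u).intervalIntegrable

lemma Fu_sub (xs : ℝ) (h : 0 ≤ xs) (u v : C(Icc (0:ℝ) xs, ℝ)) (x : ℝ) (hx : 0 ≤ x) :
    |Fu xs h u x - Fu xs h v x| ≤ Real.exp (max ‖u‖ ‖v‖) * ‖u - v‖ * x := by
  have hsub : Fu xs h u x - Fu xs h v x =
      ∫ z in (0:ℝ)..x, (Real.exp (-(u (projIcc 0 xs h z))) - Real.exp (-(v (projIcc 0 xs h z)))) :=
    (intervalIntegral.integral_sub (intE xs h u 0 x) (intE xs h v 0 x)).symm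
  rw [hsub]
  have := intervalIntegral.norm_integral_le_of_norm_le_const
    (C := Real.exp (max ‖u‖ ‖v‖) * ‖u - v‖) (a := (0:ℝ)) (b := x)
    (f := fun z => Real.exp (-(u (projIcc 0 xs h z))) - Real.exp (-(v (projIcc 0 xs h z))))
    ?_
  · rw [Real.norm_eq_abs] at this
    calc _ ≤ Real.exp (max ‖u‖ ‖v‖) * ‖u - v‖ * |x - 0| := this
    _ = _ := by rw [abs_of_nonneg (by linarith)]; ring
  · intro z _
    set p := projIcc 0 xs h z
    rw [Real.norm_eq_abs]
    calc |Real.exp (-(u p)) - Real.exp (-(v p))|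
        ≤ Real.exp (max (-(u p)) (-(v p))) * |(-(u p)) - (-(v p))| := exp_abs_sub _ _
      _ ≤ Real.exp (max ‖u‖ ‖v‖) * ‖u - v‖ := by
          apply mul_le_mul
          · exact Real.exp_le_exp.mpr (max_le_max
              (le_trans (neg_le_abs _) (abs_apply_le u p))
              (le_trans (neg_le_abs _) (abs_apply_le v p)))
          · have h0 : (-(u p)) - (-(v p)) = -((u - v) p) := by simp; ring
            rw [h0, abs_neg]
            exact abs_apply_le (u - v) p
          · exact abs_nonneg _
          · exact (Real.exp_pos _).le

lemma tau_le (xs : ℝ) (h : 0 ≤ xs) (u : C(Icc (0:ℝ) xs, ℝ)) :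
    tau xs h u ≤ xs * Fu xs h u xs := by
  have := intervalIntegral.integral_mono_on h (intF xs h u 0 xs)
    (_root_.intervalIntegrable_const (c := Fu xs h u xs))
    (fun z hz => Fu_mono xs h u hz.2)
  simpa [tau, Wu, smul_eq_mul] using this

lemma Wu_strict (xs : ℝ) (h : 0 ≤ xs) (u : C(Icc (0:ℝ) xs, ℝ)) {a b : ℝ}
    (ha : 0 ≤ a) (hab : a < b) : Wu xs h u a < Wu xs h u b := by
  have hadd := intervalIntegral.integral_add_adjacent_intervals (intF xs h u 0 a) (intF xs h u a b)
  have hpos : 0 < ∫ z in a..b, Fu xs h u z := by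
    apply intervalIntegral_pos_of_pos_on (intF xs h u a b) _ hab
    intro z hz
    have hz0 : 0 < z := lt_of_le_of_lt ha hz.1
    calc (0:ℝ) < z * Real.exp (-‖u‖) := by positivity
      _ ≤ Fu xs h u z := Fu_ge xs h u z hz0.le
  simp only [Wu]
  linarith

set_option maxHeartbeats 1000000 in
/-- if `t₁ ≤ min(τ*_u, τ*_v)` then the pressures at the respective
filling times satisfy
`|p^u(x_m,τ*_u) - p^v(x_m,τ*_v)| ≤ 2·((x*)²/t₁)·M_{u,v}³·‖u - v‖`. -/
theorem stmt_18 (xs : ℝ) (hxs : 0 < xs) (t₁ : ℝ) (ht₁ : 0 < t₁)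
    (xm : ℝ) (hxm0 : 0 < xm) (hxm : xm ≤ xs)
    (u v : C(Icc (0:ℝ) xs, ℝ)) (Υu Υv : ℝ → ℝ)
    (hΥu : ∀ s ∈ Icc (0:ℝ) (tau xs hxs.le u), Υu s ∈ Icc 0 xs ∧ Wu xs hxs.le u (Υu s) = s)
    (hΥv : ∀ s ∈ Icc (0:ℝ) (tau xs hxs.le v), Υv s ∈ Icc 0 xs ∧ Wu xs hxs.le v (Υv s) = s)
    (ht₁τ : t₁ ≤ min (tau xs hxs.le u) (tau xs hxs.le v)) :
    |press xs hxs.le u Υu xm (tau xs hxs.le u) -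
        press xs hxs.le v Υv xm (tau xs hxs.le v)| ≤
      2 * (xs ^ 2 / t₁) * Real.exp (max ‖u‖ ‖v‖) ^ 3 * ‖u - v‖ := by
  set M := Real.exp (max ‖u‖ ‖v‖) with hMdef
  have hM1 : 1 ≤ M := Real.one_le_exp (le_trans (norm_nonneg u) (le_max_left _ _))
  have hMpos : 0 < M := lt_of_lt_of_le one_pos hM1
  have htu : t₁ ≤ tau xs hxs.le u := le_trans ht₁τ (min_le_left _ _)
  have htv : t₁ ≤ tau xs hxs.le v := le_trans ht₁τ (min_le_right _ _)
  -- the front is at xs at the filling time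
  have front : ∀ (w : C(Icc (0:ℝ) xs, ℝ)) (Υ : ℝ → ℝ),
      (∀ s ∈ Icc (0:ℝ) (tau xs hxs.le w), Υ s ∈ Icc 0 xs ∧ Wu xs hxs.le w (Υ s) = s) →
      t₁ ≤ tau xs hxs.le w → Υ (tau xs hxs.le w) = xs := by
    intro w Υ hΥ ht
    obtain ⟨hmem, hW⟩ := hΥ (tau xs hxs.le w) ⟨by linarith, le_refl _⟩
    by_contra hne
    have hlt : Υ (tau xs hxs.le w) < xs := lt_of_le_of_ne hmem.2 hne
    have := Wu_strict xs hxs.le w hmem.1 hlt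
    rw [hW] at this
    simp only [tau] at this
    exact lt_irrefl _ this
  have hyu := front u Υu hΥu htu
  have hyv := front v Υv hΥv htv
  rw [press, press, hyu, hyv, if_pos hxm, if_pos hxm]
  set a := Fu xs hxs.le u xm
  set b := Fu xs hxs.le u xs
  set c := Fu xs hxs.le v xm
  set d := Fu xs hxs.le v xs
  set e := Real.exp (-‖v‖) with hedef
  have he : 0 < e := Real.exp_pos _
  have hexpv : Real.exp ‖v‖ ≤ M := Real.exp_le_exp.mpr (le_max_right _ _)
  have hexpu : Real.exp ‖u‖ ≤ M := Real.exp_le_exp.mpr (le_max_left _ _)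
  have hb' : t₁ ≤ xs * b := le_trans htu (tau_le xs hxs.le u)
  have hd' : xs * e ≤ d := Fu_ge xs hxs.le v xs hxs.le
  have hbpos : 0 < b := by nlinarith
  have hdpos : 0 < d := by nlinarith
  have hcnn : 0 ≤ c := by
    have := Fu_ge xs hxs.le v xm hxm0.le
    nlinarith [Real.exp_pos (-‖v‖)]
  have hc_ub : c ≤ xs * M := by
    have h1 := Fu_le xs hxs.le v xm hxm0.le
    nlinarith
  have hd_ub : d ≤ xs * M := by
    have h1 := Fu_le xs hxs.le v xs hxs.le
    nlinarith
  have hac : |a - c| ≤ M * ‖u - v‖ * xs := by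
    have h1 := Fu_sub xs hxs.le u v xm hxm0.le
    have h2 : M * ‖u - v‖ * xm ≤ M * ‖u - v‖ * xs := by
      apply mul_le_mul_of_nonneg_left hxm (by positivity)
    exact le_trans h1 h2
  have hbd : |b - d| ≤ M * ‖u - v‖ * xs := Fu_sub xs hxs.le u v xs hxs.le
  have hMe : 1 ≤ M * e := by
    rw [hMdef, hedef, ← Real.exp_add]
    exact Real.one_le_exp (by simp [le_max_right])
  -- rewrite goal
  have hgoal : (2 - a / b) - (2 - c / d) = -(a / b - c / d) := by ring
  rw [hgoal, abs_neg, div_sub_div a c hbpos.ne' hdpos.ne', abs_div,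
    abs_of_pos (mul_pos hbpos hdpos), div_le_iff₀ (mul_pos hbpos hdpos)]
  -- numerator bound
  have h1 : |a * d - b * c| ≤ |a - c| * d + c * |b - d| := by
    have hid : a * d - b * c = (a - c) * d + c * (d - b) := by ring
    rw [hid]
    refine le_trans (abs_add_le _ _) ?_
    rw [abs_mul, abs_mul, abs_of_pos hdpos, abs_of_nonneg hcnn, abs_sub_comm d b]
  have e1 : |a - c| * d ≤ (M * ‖u - v‖ * xs) * (xs * M) :=
    mul_le_mul hac hd_ub hdpos.le (by positivity)
  have e2 : c * |b - d| ≤ (xs * M) * (M * ‖u - v‖ * xs) :=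
    mul_le_mul hc_ub hbd (abs_nonneg _) (by positivity)
  have hnum : |a * d - b * c| ≤ 2 * xs ^ 2 * M ^ 2 * ‖u - v‖ := by nlinarith
  -- denominator bound
  have s1 : t₁ ≤ xs * b * (M * e) :=
    le_trans hb' (le_mul_of_one_le_right (by nlinarith) hMe)
  have s3 : (M * b) * (xs * e) ≤ (M * b) * d :=
    mul_le_mul_of_nonneg_left hd' (by positivity)
  have hbd2 : t₁ ≤ M * (b * d) := by nlinarith
  -- conclude
  have key : (2 * xs ^ 2 * M ^ 2 * ‖u - v‖ / t₁) * t₁ ≤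
      (2 * xs ^ 2 * M ^ 2 * ‖u - v‖ / t₁) * (M * (b * d)) :=
    mul_le_mul_of_nonneg_left hbd2 (by positivity)
  have hq1 : (2 * xs ^ 2 * M ^ 2 * ‖u - v‖ / t₁) * t₁ = 2 * xs ^ 2 * M ^ 2 * ‖u - v‖ := by
    field_simp
  have hq2 : (2 * xs ^ 2 * M ^ 2 * ‖u - v‖ / t₁) * (M * (b * d)) =
      2 * (xs ^ 2 / t₁) * M ^ 3 * ‖u - v‖ * (b * d) := by
    field_simp
  rw [hq1, hq2] at key
  linarith
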